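/- arXiv:2511.08794 — 3 statements merged into one kernel-verified Lean document; each statement's English description precedes it below -/
import Mathlib

section
/- Let n ≥ 1, let I ⊆ ℝ be an open interval, and let C, D : I → Matrix ℂ^{n×n} be continuous with C(s), D(s) symmetric for all s. Suppose H : I → Matrix ℂ^{n×n} solves the Riccati equation H' + H C H + D = 0 with symmetric initial value H(s₀) = H₀. Then H(s) is symmetric for every s ∈ I. -/
open Matrix

attribute [local instance] Matrix.normedAddCommGroup Matrix.normedSpace

private lemma stmt4_matmul_norm_le {n : ℕ} (A B : Matrix (Fin n) (Fin n) ℂ) :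
    ‖A * B‖ ≤ n * ‖A‖ * ‖B‖ := by
  have h : (0:ℝ) ≤ n * ‖A‖ * ‖B‖ := by positivity
  rw [Matrix.norm_le_iff h]
  intro i j
  rw [Matrix.mul_apply]
  calc ‖∑ k, A i k * B k j‖ ≤ ∑ k, ‖A i k * B k j‖ := norm_sum_le _ _
    _ ≤ ∑ _k : Fin n, ‖A‖ * ‖B‖ := Finset.sum_le_sum fun k _ => by
        rw [norm_mul]
        exact mul_le_mul A.norm_entry_le_entrywise_sup_norm
          B.norm_entry_le_entrywise_sup_norm (norm_nonneg _) (norm_nonneg _)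
    _ = n * ‖A‖ * ‖B‖ := by simp [Finset.sum_const, mul_assoc]

/-- solutions of the matrix Riccati equation H' + HCH + D = 0 with
symmetric C, D and symmetric initial value stay symmetric. -/

theorem stmt4 (n : ℕ) (hn : 1 ≤ n) (a b : ℝ) (I : Set ℝ) (hI : I = Set.Ioo a b)
    (C D H : ℝ → Matrix (Fin n) (Fin n) ℂ)
    (hCcont : ∀ i j, ContinuousOn (fun s => C s i j) I)
    (hDcont : ∀ i j, ContinuousOn (fun s => D s i j) I)
    (hCsymm : ∀ s ∈ I, (C s)ᵀ = C s) (hDsymm : ∀ s ∈ I, (D s)ᵀ = D s)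
    (hODE : ∀ s ∈ I, ∀ i j,
      HasDerivAt (fun t => H t i j) ((-(H s * C s * H s + D s)) i j) s)
    (s₀ : ℝ) (hs₀ : s₀ ∈ I) (hH₀ : (H s₀)ᵀ = H s₀) :
    ∀ s ∈ I, (H s)ᵀ = H s := by
  subst hI
  intro s₁ hs₁
  -- choose a compact subinterval [a', b'] of (a, b) whose interior contains s₀ and s₁
  set u : ℝ := min s₀ s₁ with hu
  set w : ℝ := max s₀ s₁ with hw
  have hau : a < u := lt_min hs₀.1 hs₁.1
  have hwb : w < b := max_lt hs₀.2 hs₁.2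
  set a' : ℝ := (a + u) / 2 with ha'
  set b' : ℝ := (w + b) / 2 with hb'
  have haa' : a < a' := by simp only [ha']; linarith
  have ha'u : a' < u := by simp only [ha']; linarith
  have hwb' : w < b' := by simp only [hb']; linarith
  have hb'b : b' < b := by simp only [hb']; linarith
  have hsub : Set.Icc a' b' ⊆ Set.Ioo a b := fun t ht =>
    ⟨lt_of_lt_of_le haa' ht.1, lt_of_le_of_lt ht.2 hb'b⟩
  have hs₀' : s₀ ∈ Set.Ioo a' b' :=
    ⟨lt_of_lt_of_le ha'u (min_le_left _ _), lt_of_le_of_lt (le_max_left _ _) hwb'⟩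
  have hs₁' : s₁ ∈ Set.Ioo a' b' :=
    ⟨lt_of_lt_of_le ha'u (min_le_right _ _), lt_of_le_of_lt (le_max_right _ _) hwb'⟩
  -- matrix-valued derivative
  have hODE' : ∀ s ∈ Set.Ioo a b,
      HasDerivAt H (-(H s * C s * H s + D s)) s := by
    intro s hs
    exact hasDerivAt_pi.2 fun i => hasDerivAt_pi.2 fun j => hODE s hs i j
  -- continuity and bounds on the compact interval
  have hHcont : ContinuousOn H (Set.Icc a' b') := fun t ht =>
    ((hODE' t (hsub ht)).continuousAt).continuousWithinAt
  have hCcont' : ContinuousOn C (Set.Icc a' b') := by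
    apply ContinuousOn.mono _ hsub
    exact continuousOn_pi.2 fun i => continuousOn_pi.2 fun j => hCcont i j
  obtain ⟨R, hR⟩ := isCompact_Icc.exists_bound_of_continuousOn hHcont
  obtain ⟨B, hB⟩ := isCompact_Icc.exists_bound_of_continuousOn hCcont'
  have hs₀'' : s₀ ∈ Set.Icc a' b' := Set.mem_Icc_of_Ioo hs₀'
  have hR0 : 0 ≤ R := le_trans (norm_nonneg _) (hR s₀ hs₀'')
  have hB0 : 0 ≤ B := le_trans (norm_nonneg _) (hB s₀ hs₀'')
  -- the vector field, cut off outside [a', b']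
  set v : ℝ → Matrix (Fin n) (Fin n) ℂ → Matrix (Fin n) (Fin n) ℂ :=
    fun t M => if t ∈ Set.Icc a' b' then -(M * C t * M + D t) else 0 with hv_def
  set sset : ℝ → Set (Matrix (Fin n) (Fin n) ℂ) :=
    fun _ => Metric.closedBall 0 R with hsset_def
  set K : NNReal := Real.toNNReal (2 * n * n * B * R) with hK
  have hKcoe : (K : ℝ) = 2 * n * n * B * R := Real.coe_toNNReal _ (by positivity)
  have hv : ∀ t, LipschitzOnWith K (v t) (sset t) := by
    intro t
    by_cases ht : t ∈ Set.Icc a' b'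
    · apply LipschitzOnWith.of_dist_le_mul
      intro M hM N hN
      simp only [hsset_def, Metric.mem_closedBall, dist_zero_right] at hM hN
      simp only [hv_def, if_pos ht, dist_eq_norm]
      have key : -(M * C t * M + D t) - -(N * C t * N + D t)
          = -((M - N) * C t * M + N * C t * (M - N)) := by
        noncomm_ring
      rw [key, norm_neg]
      have hn0 : (0:ℝ) ≤ (n:ℝ) := Nat.cast_nonneg n
      have h1 : ‖(M - N) * C t * M‖ ≤ n * (n * ‖M - N‖ * B) * R := by
        calc ‖(M - N) * C t * M‖ ≤ n * ‖(M - N) * C t‖ * ‖M‖ := stmt4_matmul_norm_le _ _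
          _ ≤ n * (n * ‖M - N‖ * B) * R := by
            have h2 : ‖(M - N) * C t‖ ≤ n * ‖M - N‖ * ‖C t‖ := stmt4_matmul_norm_le _ _
            have h3 : ‖(M - N) * C t‖ ≤ n * ‖M - N‖ * B :=
              h2.trans (mul_le_mul_of_nonneg_left (hB t ht) (by positivity))
            exact mul_le_mul (mul_le_mul_of_nonneg_left h3 hn0) hM
              (norm_nonneg _) (by positivity)
      have h4 : ‖N * C t * (M - N)‖ ≤ n * (n * B * R) * ‖M - N‖ := by
        calc ‖N * C t * (M - N)‖ ≤ n * ‖N * C t‖ * ‖M - N‖ := stmt4_matmul_norm_le _ _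
          _ ≤ n * (n * B * R) * ‖M - N‖ := by
            have h2 : ‖N * C t‖ ≤ n * ‖N‖ * ‖C t‖ := stmt4_matmul_norm_le _ _
            have h3 : ‖N * C t‖ ≤ n * B * R := by
              refine h2.trans ?_
              calc (n:ℝ) * ‖N‖ * ‖C t‖ ≤ (n:ℝ) * R * B :=
                    mul_le_mul (mul_le_mul_of_nonneg_left hN hn0) (hB t ht)
                      (norm_nonneg _) (by positivity)
                _ = (n:ℝ) * B * R := by ring
            exact mul_le_mul_of_nonneg_right (mul_le_mul_of_nonneg_left h3 hn0)
              (norm_nonneg _)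
      calc ‖(M - N) * C t * M + N * C t * (M - N)‖
          ≤ ‖(M - N) * C t * M‖ + ‖N * C t * (M - N)‖ := norm_add_le _ _
        _ ≤ (K : ℝ) * ‖M - N‖ := by rw [hKcoe]; linarith [h1, h4]
        _ = (K : ℝ) * ‖M - N‖ := rfl
    · simp only [hv_def, if_neg ht]
      exact LipschitzOnWith.of_dist_le_mul fun M _ N _ => by
        simp [mul_nonneg K.coe_nonneg dist_nonneg]
  -- H and Hᵀ both solve the ODE with vector field v on (a', b')
  have hmemH : ∀ t ∈ Set.Ioo a' b', H t ∈ sset t := by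
    intro t ht
    simp only [hsset_def, Metric.mem_closedBall, dist_zero_right]
    exact hR t (Set.mem_Icc_of_Ioo ht)
  have hf : ∀ t ∈ Set.Ioo a' b',
      HasDerivAt (fun t => (H t)ᵀ) (v t ((H t)ᵀ)) t ∧ (H t)ᵀ ∈ sset t := by
    intro t ht
    constructor
    · have hd : HasDerivAt (fun t => (H t)ᵀ) ((-(H t * C t * H t + D t))ᵀ) t := by
        exact hasDerivAt_pi.2 fun i => hasDerivAt_pi.2 fun j => hODE t (hsub (Set.mem_Icc_of_Ioo ht)) j i
      have heq : (-(H t * C t * H t + D t))ᵀ = v t ((H t)ᵀ) := by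
        have htI : t ∈ Set.Ioo a b := hsub (Set.mem_Icc_of_Ioo ht)
        simp only [hv_def, if_pos (Set.mem_Icc_of_Ioo ht)]
        rw [transpose_neg, transpose_add, transpose_mul, transpose_mul,
          hCsymm t htI, hDsymm t htI, mul_assoc]
      rwa [heq] at hd
    · simp only [hsset_def, Metric.mem_closedBall, dist_zero_right, Matrix.norm_transpose]
      exact hR t (Set.mem_Icc_of_Ioo ht)
  have hg : ∀ t ∈ Set.Ioo a' b',
      HasDerivAt H (v t (H t)) t ∧ H t ∈ sset t := by
    intro t ht
    refine ⟨?_, hmemH t ht⟩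
    have hd := hODE' t (hsub (Set.mem_Icc_of_Ioo ht))
    have heq : -(H t * C t * H t + D t) = v t (H t) := by
      simp only [hv_def, if_pos (Set.mem_Icc_of_Ioo ht)]
    rwa [heq] at hd
  have := ODE_solution_unique_of_mem_Ioo (fun t _ => hv t) hs₀' hf hg hH₀
  exact this hs₁'
end

section
/- Let φ₁, φ₂ : ℝⁿ → ℂ be continuous functions with Im φ₁ ≥ c|y|² and Im φ₂ ≥ c|y|² for some c > 0, and suppose |φ₁(y) - φ₂(y)| ≤ C|y|^{N+1} for all y in a neighborhood U of 0. Then for all ρ ≥ 1 and y ∈ U, |e^{iρφ₁(y)} - e^{iρφ₂(y)}| ≤ Cρ|y|^{N+1} e^{-cρ|y|²}. -/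
lemma exp_sub_exp_le_aux (z w : ℂ) (M : ℝ) (hz : z.re ≤ M) (hw : w.re ≤ M) :
    ‖Complex.exp z - Complex.exp w‖ ≤ Real.exp M * ‖z - w‖ := by
  have hs : Convex ℝ (segment ℝ w z) := convex_segment _ _
  have hre : ∀ x ∈ segment ℝ w z, x.re ≤ M := by
    rintro x ⟨a, b, ha, hb, hab, rfl⟩
    have : (a • w + b • z).re = a * w.re + b * z.re := by
      simp [Complex.add_re, Complex.smul_re]
    rw [this]
    have hM : a * M + b * M = M := by rw [← add_mul, hab, one_mul]
    have h1 := mul_le_mul_of_nonneg_left hw ha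
    have h2 := mul_le_mul_of_nonneg_left hz hb
    linarith
  set F : ℂ → (ℂ →L[ℝ] ℂ) := fun x =>
    (ContinuousLinearMap.smulRight (1 : ℂ →L[ℂ] ℂ) (Complex.exp x)).restrictScalars ℝ with hF
  have hderiv : ∀ x ∈ segment ℝ w z,
      HasFDerivWithinAt Complex.exp (F x) (segment ℝ w z) x := fun x _ =>
    ((Complex.hasDerivAt_exp x).hasFDerivAt.restrictScalars ℝ).hasFDerivWithinAt
  have hbound : ∀ x ∈ segment ℝ w z, ‖F x‖ ≤ Real.exp M := by
    intro x hx
    rw [hF]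
    simp only [ContinuousLinearMap.norm_restrictScalars,
      ContinuousLinearMap.norm_smulRight_apply, norm_one, one_mul,
      Complex.norm_exp]
    exact Real.exp_le_exp.mpr (hre x hx)
  exact hs.norm_image_sub_le_of_norm_hasFDerivWithin_le hderiv hbound
    (left_mem_segment ℝ w z) (right_mem_segment ℝ w z)

/-- difference of two Gaussian beam phases:
|e^{iρφ₁} - e^{iρφ₂}| ≤ Cρ|y|^{N+1} e^{-cρ|y|²} near 0. -/
theorem stmt10 (n N : ℕ) (c C : ℝ) (hc : 0 < c) (hC : 0 < C)
    (φ₁ φ₂ : EuclideanSpace ℝ (Fin n) → ℂ)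
    (h1 : Continuous φ₁) (h2 : Continuous φ₂)
    (him1 : ∀ y, c * ‖y‖ ^ 2 ≤ (φ₁ y).im) (him2 : ∀ y, c * ‖y‖ ^ 2 ≤ (φ₂ y).im)
    (U : Set (EuclideanSpace ℝ (Fin n))) (hU : U ∈ nhds (0 : EuclideanSpace ℝ (Fin n)))
    (hdiff : ∀ y ∈ U, ‖φ₁ y - φ₂ y‖ ≤ C * ‖y‖ ^ (N + 1)) :
    ∀ ρ : ℝ, 1 ≤ ρ → ∀ y ∈ U,
      ‖Complex.exp (Complex.I * ρ * φ₁ y) - Complex.exp (Complex.I * ρ * φ₂ y)‖ ≤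
        C * ρ * ‖y‖ ^ (N + 1) * Real.exp (-c * ρ * ‖y‖ ^ 2) := by
  intro ρ hρ y hy
  have hρ0 : 0 < ρ := lt_of_lt_of_le one_pos hρ
  set M : ℝ := -c * ρ * ‖y‖ ^ 2 with hM
  have hre : ∀ φ : ℂ, c * ‖y‖ ^ 2 ≤ φ.im → (Complex.I * ρ * φ).re ≤ M := by
    intro φ hφ
    have : (Complex.I * ρ * φ).re = -(ρ * φ.im) := by simp [Complex.mul_re, Complex.mul_im]
    rw [this, hM]
    nlinarith [mul_le_mul_of_nonneg_left hφ hρ0.le]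
  have key := exp_sub_exp_le_aux (Complex.I * ρ * φ₁ y) (Complex.I * ρ * φ₂ y) M
    (hre _ (him1 y)) (hre _ (him2 y))
  have hdiffnorm : ‖Complex.I * ρ * φ₁ y - Complex.I * ρ * φ₂ y‖ ≤ ρ * (C * ‖y‖ ^ (N + 1)) := by
    have : Complex.I * ρ * φ₁ y - Complex.I * ρ * φ₂ y
        = Complex.I * ρ * (φ₁ y - φ₂ y) := by ring
    rw [this]
    rw [norm_mul, norm_mul, Complex.norm_I, one_mul, Complex.norm_real, Real.norm_eq_abs,
      abs_of_pos hρ0]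
    exact mul_le_mul_of_nonneg_left (hdiff y hy) hρ0.le
  calc ‖Complex.exp (Complex.I * ρ * φ₁ y) - Complex.exp (Complex.I * ρ * φ₂ y)‖
      ≤ Real.exp M * ‖Complex.I * ρ * φ₁ y - Complex.I * ρ * φ₂ y‖ := key
    _ ≤ Real.exp M * (ρ * (C * ‖y‖ ^ (N + 1))) :=
        mul_le_mul_of_nonneg_left hdiffnorm (Real.exp_pos M).le
    _ = C * ρ * ‖y‖ ^ (N + 1) * Real.exp (-c * ρ * ‖y‖ ^ 2) := by rw [hM]; ring
end

section
/- Let S : ℝⁿ → ℂ be continuous with Im S(y) ≥ c|y|² for some c > 0, and let a : ℝⁿ → ℂ be continuous, compactly supported, with a(0) = 0 and |a(y)| ≤ L|y| near 0. Then ρ^{n/2} ∫_{ℝⁿ} e^{iρS(y)} a(y) dy → 0 as ρ → ∞. -/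
set_option maxHeartbeats 1000000

open MeasureTheory Filter Real Complex

/-- if Im S ≥ c|y|² and the continuous compactly supported amplitude a
vanishes (linearly) at 0, then ρ^{n/2} ∫ e^{iρS} a dy → 0 as ρ → ∞. -/
theorem stmt12 (n : ℕ) (hn : 1 ≤ n) (c : ℝ) (hc : 0 < c)
    (S : EuclideanSpace ℝ (Fin n) → ℂ) (hS : Continuous S)
    (him : ∀ y, c * ‖y‖ ^ 2 ≤ (S y).im)
    (a : EuclideanSpace ℝ (Fin n) → ℂ) (ha : Continuous a) (hsupp : HasCompactSupport a)
    (ha0 : a 0 = 0) (L δ : ℝ) (hδ : 0 < δ)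
    (hlin : ∀ y : EuclideanSpace ℝ (Fin n), ‖y‖ ≤ δ → ‖a y‖ ≤ L * ‖y‖) :
    Filter.Tendsto (fun ρ : ℝ =>
      ((ρ ^ ((n : ℝ) / 2) : ℝ) : ℂ) * ∫ y, Complex.exp (Complex.I * ρ * S y) * a y)
      Filter.atTop (nhds 0) := by
  obtain ⟨M, hM⟩ := hsupp.exists_bound_of_continuous ha
  have hM0 : 0 ≤ M := le_trans (norm_nonneg _) (hM 0)
  -- the key convergence after rescaling
  have key : Tendsto (fun ρ : ℝ => ∫ x : EuclideanSpace ℝ (Fin n),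
      Complex.exp (Complex.I * ρ * S ((ρ ^ (-(1:ℝ)/2)) • x)) * a ((ρ ^ (-(1:ℝ)/2)) • x))
      atTop (nhds 0) := by
    have h0 : (0:ℂ) = ∫ (_ : EuclideanSpace ℝ (Fin n)), (0:ℂ) := by simp
    rw [h0]
    have hbound : Integrable (fun x : EuclideanSpace ℝ (Fin n) =>
        M * Real.exp (-c * ‖x‖ ^ 2)) := by
      have := (GaussianFourier.integrable_cexp_neg_mul_sq_norm_add (V := EuclideanSpace ℝ (Fin n))
        (b := (c:ℂ)) (by simpa using hc) 0 0).norm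
      simp only [zero_mul, add_zero] at this
      have heq : ∀ x : EuclideanSpace ℝ (Fin n),
          ‖Complex.exp (-(c:ℂ) * (‖x‖:ℂ) ^ 2)‖ = Real.exp (-c * ‖x‖ ^ 2) := by
        intro x
        have hcast : (-(c:ℂ) * (‖x‖:ℂ) ^ 2) = ((-c * ‖x‖ ^ 2 : ℝ) : ℂ) := by
          push_cast; ring
        rw [hcast, Complex.norm_exp, Complex.ofReal_re]
      exact (this.congr (Filter.Eventually.of_forall fun x => heq x)).const_mul M
    refine tendsto_integral_filter_of_dominated_convergence
      (fun x => M * Real.exp (-c * ‖x‖ ^ 2)) ?_ ?_ hbound ?_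
    · -- measurability
      refine Filter.Eventually.of_forall fun ρ => Continuous.aestronglyMeasurable ?_
      fun_prop
    · -- domination
      filter_upwards [eventually_ge_atTop (1:ℝ)] with ρ hρ
      refine Filter.Eventually.of_forall fun x => ?_
      have hρ0 : (0:ℝ) < ρ := lt_of_lt_of_le one_pos hρ
      rw [norm_mul]
      have hnorm_smul : ‖(ρ ^ (-(1:ℝ)/2)) • x‖ = (ρ ^ (-(1:ℝ)/2)) * ‖x‖ := by
        rw [norm_smul, Real.norm_eq_abs, abs_of_pos (Real.rpow_pos_of_pos hρ0 _)]
      have hexp : ‖Complex.exp (Complex.I * ρ * S ((ρ ^ (-(1:ℝ)/2)) • x))‖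
          ≤ Real.exp (-c * ‖x‖ ^ 2) := by
        rw [Complex.norm_exp]
        apply Real.exp_le_exp.2
        have hre : (Complex.I * ρ * S ((ρ ^ (-(1:ℝ)/2)) • x)).re
            = -ρ * (S ((ρ ^ (-(1:ℝ)/2)) • x)).im := by
          simp [Complex.mul_re, Complex.mul_im]
          try ring
        rw [hre]
        have h1 := him ((ρ ^ (-(1:ℝ)/2)) • x)
        rw [hnorm_smul] at h1
        have h2 : ρ * (ρ ^ (-(1:ℝ)/2)) ^ 2 = 1 := by
          have hsq : (ρ ^ (-(1:ℝ)/2)) ^ 2 = ρ ^ (-1:ℝ) := by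
            rw [← Real.rpow_natCast (ρ ^ (-(1:ℝ)/2)) 2, ← Real.rpow_mul hρ0.le,
              show (-(1:ℝ)/2) * ((2:ℕ):ℝ) = -1 by push_cast; norm_num]
          rw [hsq, Real.rpow_neg_one]
          field_simp
        have h3 : -ρ * (S ((ρ ^ (-(1:ℝ)/2)) • x)).im ≤ -ρ * (c * (ρ ^ (-(1:ℝ)/2) * ‖x‖) ^ 2) := by
          apply mul_le_mul_of_nonpos_left h1 (by linarith)
        refine le_trans h3 (le_of_eq ?_)
        have : -ρ * (c * (ρ ^ (-(1:ℝ)/2) * ‖x‖) ^ 2)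
            = -(ρ * (ρ ^ (-(1:ℝ)/2)) ^ 2) * (c * ‖x‖ ^ 2) := by ring
        rw [this, h2]; ring
      calc ‖Complex.exp (Complex.I * ρ * S ((ρ ^ (-(1:ℝ)/2)) • x))‖ * ‖a ((ρ ^ (-(1:ℝ)/2)) • x)‖
          ≤ Real.exp (-c * ‖x‖ ^ 2) * M :=
            mul_le_mul hexp (hM _) (norm_nonneg _) (Real.exp_nonneg _)
        _ = M * Real.exp (-c * ‖x‖ ^ 2) := mul_comm _ _
    · -- pointwise limit
      refine Filter.Eventually.of_forall fun x => ?_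
      have hlim : Tendsto (fun ρ : ℝ => (ρ ^ (-(1:ℝ)/2)) • x) atTop (nhds 0) := by
        have : Tendsto (fun ρ : ℝ => ρ ^ (-(1:ℝ)/2)) atTop (nhds 0) := by
          have h := tendsto_rpow_neg_atTop (show (0:ℝ) < 1/2 by norm_num)
          simpa [neg_div] using h
        simpa using this.smul_const x
      have hnorm : Tendsto (fun ρ : ℝ => ‖a ((ρ ^ (-(1:ℝ)/2)) • x)‖) atTop (nhds 0) := by
        have := ((ha.tendsto 0).comp hlim).norm
        simpa [ha0] using this
      apply squeeze_zero_norm' _ hnorm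
      filter_upwards [eventually_ge_atTop (0:ℝ)] with ρ hρ
      rw [norm_mul]
      have hexp : ‖Complex.exp (Complex.I * ρ * S ((ρ ^ (-(1:ℝ)/2)) • x))‖ ≤ 1 := by
        rw [Complex.norm_exp]
        apply Real.exp_le_one_iff.2
        have : (Complex.I * ρ * S ((ρ ^ (-(1:ℝ)/2)) • x)).re
            = -ρ * (S ((ρ ^ (-(1:ℝ)/2)) • x)).im := by
          simp [Complex.mul_re, Complex.mul_im]
          try ring
        rw [this]
        have h1 : 0 ≤ (S ((ρ ^ (-(1:ℝ)/2)) • x)).im :=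
          le_trans (by positivity) (him _)
        nlinarith
      calc ‖Complex.exp (Complex.I * ρ * S ((ρ ^ (-(1:ℝ)/2)) • x))‖ *
            ‖a ((ρ ^ (-(1:ℝ)/2)) • x)‖
          ≤ 1 * ‖a ((ρ ^ (-(1:ℝ)/2)) • x)‖ :=
            mul_le_mul_of_nonneg_right hexp (norm_nonneg _)
        _ = ‖a ((ρ ^ (-(1:ℝ)/2)) • x)‖ := one_mul _
  -- now relate the original to the rescaled one, for ρ > 0
  apply key.congr'
  filter_upwards [eventually_gt_atTop (0:ℝ)] with ρ hρ
  have hR : (0:ℝ) < ρ ^ (-(1:ℝ)/2) := Real.rpow_pos_of_pos hρ _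
  have := MeasureTheory.Measure.integral_comp_smul (volume : Measure (EuclideanSpace ℝ (Fin n)))
    (fun y => Complex.exp (Complex.I * ρ * S y) * a y) (ρ ^ (-(1:ℝ)/2))
  rw [this]
  rw [finrank_euclideanSpace_fin]
  have hpow : |((ρ ^ (-(1:ℝ)/2)) ^ n)⁻¹| = ρ ^ ((n:ℝ)/2) := by
    rw [abs_of_pos (by positivity)]
    rw [← Real.rpow_natCast (ρ ^ (-(1:ℝ)/2)) n, ← Real.rpow_mul hρ.le,
      ← Real.rpow_neg hρ.le]
    ring_nf
  rw [hpow, Complex.real_smul]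
end
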